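/- Fix integers n ≥ 1 and ε ∈ {0,1} with n + ε ≥ 2, and let m = 2(n − 1 + 2ε). For g ≥ ε, with k the residue of g − ε mod m, α = (g − ε − k)/m, and δ = δ_min = ((g − ε − k)/2)(α − 1) + kα and p = g + δ, the inequality δ ≥ α(p − δ − ε − (n − 1 + 2ε)(α + 1)) holds, and moreover α = ⌊(p − δ − ε)/m⌋. -/
import Mathlib


theorem stmt_13 (n ε : ℤ) (hn : 1 ≤ n) (hε : ε = 0 ∨ ε = 1) (hnε : 2 ≤ n + ε)
    (g : ℤ) (hg : ε ≤ g) :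
    let m : ℤ := 2 * (n - 1 + 2 * ε)
    let k : ℤ := (g - ε) % m
    let α : ℤ := (g - ε - k) / m
    let δ : ℤ := ((g - ε - k) / 2) * (α - 1) + k * α
    let p : ℤ := g + δ
    δ ≥ α * (p - δ - ε - (n - 1 + 2 * ε) * (α + 1)) ∧ α = (p - δ - ε) / m := by
  intro m k α δ p
  have hM : (1 : ℤ) ≤ n - 1 + 2 * ε := by rcases hε with h | h <;> omega
  have hm0 : m ≠ 0 := by simp only [m]; omega
  have hsub : g - ε - k = m * ((g - ε) / m) := by
    have := Int.mul_ediv_add_emod (g - ε) m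
    simp only [k]; omega
  have hα : α = (g - ε) / m := by
    simp only [α, hsub, Int.mul_ediv_cancel_left _ hm0]
  have h2 : (g - ε - k) / 2 = (n - 1 + 2 * ε) * α := by
    rw [hsub, ← hα]
    have : m * ((g - ε - k) / m) = 2 * ((n - 1 + 2 * ε) * ((g - ε - k) / m)) := by
      simp only [m]; ring
    rw [this, Int.mul_ediv_cancel_left _ (by norm_num)]
  have hgek : g - ε = m * α + k := by
    rw [hα, ← hsub]; ring
  have hδ : δ = (n - 1 + 2 * ε) * α * (α - 1) + k * α := by
    simp only [δ, h2]
  constructor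
  · have : p - δ - ε = g - ε := by simp only [p]; ring
    rw [ge_iff_le, this, hgek, hδ]
    simp only [m]; nlinarith [sq_nonneg α]
  · have : p - δ - ε = g - ε := by simp only [p]; ring
    rw [this, hα]
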